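/- Every unique palindromic substring of a string S is left-maximal in S: if a palindromic substring w of S occurs exactly once in S, then no palindromic substring of S contains w as a proper suffix. -/
import Mathlib


def occCount {α : Type*} [DecidableEq α] (S w : List α) : ℕ :=
  ((List.range (S.length + 1)).filter (fun i => decide (w <+: S.drop i))).length

theorem unique_palindrome_is_left_maximal {α : Type*} [DecidableEq α]
    (S w : List α) (hw : w <:+: S) (hwpal : w.reverse = w)
    (huniq : occCount S w = 1) :
    ¬ ∃ w', w' <:+: S ∧ w'.reverse = w' ∧ w <:+ w' ∧ w ≠ w' := by
  rintro ⟨w', hinf, hpal', hsuf, hne⟩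
  obtain ⟨u, hu⟩ := hsuf
  have hune : u ≠ [] := by
    rintro rfl
    exact hne (by simpa using hu)
  have hpre : w <+: w' := by
    rw [← hwpal, ← hpal']
    exact List.reverse_prefix.mpr ⟨u, hu⟩
  obtain ⟨s, t, hst⟩ := hinf
  set a := s.length with ha
  set b := s.length + u.length with hb
  have hab : a ≠ b := by
    have : 0 < u.length := List.length_pos_iff.mpr hune
    omega
  have hlen : S.length = s.length + u.length + w.length + t.length := by
    rw [← hst, ← hu]
    simp [List.length_append]
    omega
  have hdropa : w <+: S.drop a := by
    have : S.drop a = w' ++ t := by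
      rw [← hst, List.append_assoc, ha, List.drop_left]
    rw [this]
    exact hpre.trans (List.prefix_append _ _)
  have hdropb : w <+: S.drop b := by
    have hS : S = (s ++ u) ++ (w ++ t) := by
      rw [← hst, ← hu]; simp
    have : S.drop b = w ++ t := by
      rw [hS]
      have : b = (s ++ u).length := by simp [hb]
      rw [this, List.drop_left]
    rw [this]
    exact List.prefix_append _ _
  have hma : a ∈ (List.range (S.length + 1)).filter
      (fun i => decide (w <+: S.drop i)) := by
    simp only [List.mem_filter, List.mem_range, decide_eq_true_eq]
    exact ⟨by omega, hdropa⟩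
  have hmb : b ∈ (List.range (S.length + 1)).filter
      (fun i => decide (w <+: S.drop i)) := by
    simp only [List.mem_filter, List.mem_range, decide_eq_true_eq]
    exact ⟨by omega, hdropb⟩
  obtain ⟨x, hx⟩ := List.length_eq_one_iff.mp huniq
  rw [hx, List.mem_singleton] at hma hmb
  exact hab (hma.trans hmb.symm)
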